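/- arXiv:2204.07278 — 2 statements merged into one kernel-verified Lean document; each statement's English description precedes it below -/
import Mathlib

section
/- Suppose the CFL condition α·sup_{x∈Ω}|f(x)| + 2βν < 1 holds, λ > 0, ν > 0, and 0 ≤ g(x_i, M̄_{i,j}) ≤ G for all i,j. Let (Ψ_{i,j}) solve the explicit backward finite-difference scheme. Then for each j = 1,…,N_t: (1/(1 + (Δt/λ)G))·min_i Ψ_{i,j} ≤ Ψ_{i,j-1} ≤ max_i Ψ_{i,j} for every i, provided Ψ_{i,j} ≥ 0 for all i. Consequently, if Ψ_{i,N_t} ≥ 0 for all i, then Ψ_{i,j} ≥ (1 + (Δt/λ)G)^{-(N_t-j)}·min_i Ψ_{i,N_t} for all i and j. -/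
/-- One-step minimum/maximum principle for the explicit backward
finite-difference scheme, and the resulting lower bound after iterating from
the terminal time. -/
theorem stmt4 (T : ℝ) (hT : 0 < T) (Nx Nt : ℕ) (hNx : 1 ≤ Nx) (hNt : 1 ≤ Nt)
    (f : ℝ → ℝ) (hf : Continuous f) (hfper : Function.Periodic f 2)
    (g : ℝ → ℝ → ℝ) (G : ℝ)
    (lam ν : ℝ) (hlam : 0 < lam) (hν : 0 < ν)
    -- grid parameters
    (Δx Δt α β : ℝ)
    (hΔx : Δx = 1 / (Nx : ℝ)) (hΔt : Δt = T / (Nt : ℝ))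
    (hα : α = Δt / Δx) (hβ : β = Δt / Δx ^ 2)
    (x : ZMod (2 * Nx + 1) → ℝ) (hx : ∀ i, x i = (ZMod.val i : ℝ) * Δx)
    -- CFL condition
    (hCFL : α * sSup ((fun y => |f y|) '' Set.Icc (-1 : ℝ) 1) + 2 * β * ν < 1)
    -- data M̄ with 0 ≤ g(x_i, M̄_{i,j}) ≤ G, and the scheme solution Ψ
    (M Ψ : ZMod (2 * Nx + 1) → ℕ → ℝ)
    (hg : ∀ i, ∀ j ≤ Nt, 0 ≤ g (x i) (M i j) ∧ g (x i) (M i j) ≤ G)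
    (hscheme : ∀ j, 1 ≤ j → j ≤ Nt → ∀ i,
      (Ψ i (j - 1) - Ψ i j) / Δt =
        max (f (x i)) 0 * ((Ψ (i + 1) j - Ψ i j) / Δx)
          + min (f (x i)) 0 * ((Ψ i j - Ψ (i - 1) j) / Δx)
          + ν * ((Ψ (i + 1) j - 2 * Ψ i j + Ψ (i - 1) j) / Δx ^ 2)
          - (1 / lam) * g (x i) (M i j) * Ψ i (j - 1)) :
    (∀ j, 1 ≤ j → j ≤ Nt → (∀ i, 0 ≤ Ψ i j) → ∀ i,
      (1 / (1 + (Δt / lam) * G)) * (⨅ i' : ZMod (2 * Nx + 1), Ψ i' j) ≤ Ψ i (j - 1) ∧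
      Ψ i (j - 1) ≤ ⨆ i' : ZMod (2 * Nx + 1), Ψ i' j) ∧
    ((∀ i, 0 ≤ Ψ i Nt) → ∀ i, ∀ j ≤ Nt,
      ((1 + (Δt / lam) * G)⁻¹) ^ (Nt - j)
          * (⨅ i' : ZMod (2 * Nx + 1), Ψ i' Nt) ≤ Ψ i j) := by
  haveI : NeZero (2 * Nx + 1) := ⟨Nat.succ_ne_zero _⟩
  have hNt0 : (0 : ℝ) < (Nt : ℝ) := by exact_mod_cast Nat.lt_of_lt_of_le Nat.zero_lt_one hNt
  have hNx0 : (0 : ℝ) < (Nx : ℝ) := by exact_mod_cast Nat.lt_of_lt_of_le Nat.zero_lt_one hNx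
  have hΔt0 : 0 < Δt := by rw [hΔt]; positivity
  have hΔx0 : 0 < Δx := by rw [hΔx]; positivity
  have hα0 : 0 < α := by rw [hα]; positivity
  have hβ0 : 0 < β := by rw [hβ]; positivity
  have hG0 : 0 ≤ G := le_trans (hg 0 Nt le_rfl).1 (hg 0 Nt le_rfl).2
  have hD0 : 0 < Δt / lam := by positivity
  have hC1 : (1 : ℝ) ≤ 1 + (Δt / lam) * G := by nlinarith
  have hC0 : (0 : ℝ) < 1 + (Δt / lam) * G := lt_of_lt_of_le one_pos hC1
  -- the sup bound on |f|
  set S := sSup ((fun y => |f y|) '' Set.Icc (-1 : ℝ) 1) with hS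
  have hbdd : BddAbove ((fun y => |f y|) '' Set.Icc (-1 : ℝ) 1) :=
    (isCompact_Icc.image_of_continuousOn hf.abs.continuousOn).bddAbove
  have hfS : ∀ y : ℝ, |f y| ≤ S := by
    intro y
    obtain ⟨z, hz, hfz⟩ := hfper.exists_mem_Ico two_pos y (-1)
    have hz' : z ∈ Set.Icc (-1 : ℝ) 1 := ⟨hz.1, by have := hz.2; linarith⟩
    rw [hfz]
    exact le_csSup hbdd ⟨z, hz', rfl⟩
  -- min/max facts
  have hinf_le : ∀ (j : ℕ) (k : ZMod (2 * Nx + 1)),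
      (⨅ i' : ZMod (2 * Nx + 1), Ψ i' j) ≤ Ψ k j :=
    fun j k => ciInf_le (Finite.bddBelow_range fun i' => Ψ i' j) k
  have hle_sup : ∀ (j : ℕ) (k : ZMod (2 * Nx + 1)),
      Ψ k j ≤ ⨆ i' : ZMod (2 * Nx + 1), Ψ i' j :=
    fun j k => le_ciSup (Finite.bddAbove_range fun i' => Ψ i' j) k
  -- the one-step estimate
  have key : ∀ j, 1 ≤ j → j ≤ Nt → (∀ i, 0 ≤ Ψ i j) → ∀ i,
      (1 / (1 + (Δt / lam) * G)) * (⨅ i' : ZMod (2 * Nx + 1), Ψ i' j) ≤ Ψ i (j - 1) ∧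
      Ψ i (j - 1) ≤ ⨆ i' : ZMod (2 * Nx + 1), Ψ i' j := by
    intro j hj1 hjNt hpos i
    have hE := hscheme j hj1 hjNt i
    obtain ⟨hgi0, hgiG⟩ := hg i j hjNt
    set gi := g (x i) (M i j) with hgi
    clear_value gi
    set a := α * max (f (x i)) 0 + β * ν with ha
    set b := β * ν - α * min (f (x i)) 0 with hb
    clear_value a b
    have ha0 : 0 ≤ a := by
      rw [ha]
      exact add_nonneg (mul_nonneg hα0.le (le_max_right _ _)) (mul_nonneg hβ0.le hν.le)
    have hb0 : 0 ≤ b := by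
      rw [hb]
      have h1 : min (f (x i)) 0 ≤ 0 := min_le_right _ _
      nlinarith
    have habs : max (f (x i)) 0 - min (f (x i)) 0 = |f (x i)| := by
      rcases le_total (f (x i)) 0 with h | h
      · rw [max_eq_right h, min_eq_left h, abs_of_nonpos h]; ring
      · rw [max_eq_left h, min_eq_right h, abs_of_nonneg h]; ring
    have hab1 : a + b < 1 := by
      have h1 : a + b = α * |f (x i)| + 2 * β * ν := by rw [ha, hb, ← habs]; ring
      have h2 : α * |f (x i)| ≤ α * S := mul_le_mul_of_nonneg_left (hfS _) hα0.le
      linarith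
    -- solve the scheme for Ψ i (j-1)
    have hsolve : Ψ i (j - 1) * (1 + (Δt / lam) * gi) =
        (1 - a - b) * Ψ i j + a * Ψ (i + 1) j + b * Ψ (i - 1) j := by
      have hΔt' : Δt ≠ 0 := hΔt0.ne'
      have hΔx' : Δx ≠ 0 := hΔx0.ne'
      have hlam' : lam ≠ 0 := hlam.ne'
      rw [ha, hb, hα, hβ]
      field_simp at hE ⊢
      linear_combination hE
    have hm0 : 0 ≤ ⨅ i' : ZMod (2 * Nx + 1), Ψ i' j := le_ciInf fun i' => hpos i'
    have hRlow : (⨅ i' : ZMod (2 * Nx + 1), Ψ i' j) ≤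
        (1 - a - b) * Ψ i j + a * Ψ (i + 1) j + b * Ψ (i - 1) j := by
      have h1 := hinf_le j i
      have h2 := hinf_le j (i + 1)
      have h3 := hinf_le j (i - 1)
      have k1 := mul_le_mul_of_nonneg_left h1 (by linarith : (0:ℝ) ≤ 1 - a - b)
      have k2 := mul_le_mul_of_nonneg_left h2 ha0
      have k3 := mul_le_mul_of_nonneg_left h3 hb0
      linarith [k1, k2, k3]
    have hRhigh : (1 - a - b) * Ψ i j + a * Ψ (i + 1) j + b * Ψ (i - 1) j ≤
        ⨆ i' : ZMod (2 * Nx + 1), Ψ i' j := by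
      have h1 := hle_sup j i
      have h2 := hle_sup j (i + 1)
      have h3 := hle_sup j (i - 1)
      have k1 := mul_le_mul_of_nonneg_left h1 (by linarith : (0:ℝ) ≤ 1 - a - b)
      have k2 := mul_le_mul_of_nonneg_left h2 ha0
      have k3 := mul_le_mul_of_nonneg_left h3 hb0
      linarith [k1, k2, k3]
    clear hE hscheme hfS hx hg hCFL
    have hcg0 : 0 ≤ (Δt / lam) * gi := mul_nonneg hD0.le hgi0
    have hcgC : (Δt / lam) * gi ≤ (Δt / lam) * G := mul_le_mul_of_nonneg_left hgiG hD0.le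
    generalize hmdef : (⨅ i' : ZMod (2 * Nx + 1), Ψ i' j) = m at hRlow hm0 ⊢
    generalize hMdef : (⨆ i' : ZMod (2 * Nx + 1), Ψ i' j) = Mx at hRhigh ⊢
    generalize hPdef : Ψ i (j - 1) = P at hsolve ⊢
    generalize hQdef : Ψ i j = Q at hsolve hRlow hRhigh
    generalize hRdef : Ψ (i + 1) j = Rp at hsolve hRlow hRhigh
    generalize hSdef : Ψ (i - 1) j = Sp at hsolve hRlow hRhigh
    have hP0 : 0 ≤ P := by
      by_contra h
      push_neg at h
      have h2 : P * ((Δt / lam) * gi) ≤ 0 := mul_nonpos_of_nonpos_of_nonneg h.le hcg0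
      linarith [hsolve, hRlow, hm0, h2]
    constructor
    · rw [one_div, inv_mul_le_iff₀ hC0]
      have h3 : P * ((Δt / lam) * gi) ≤ P * ((Δt / lam) * G) :=
        mul_le_mul_of_nonneg_left hcgC hP0
      linarith [hsolve, hRlow, h3]
    · have h4 : 0 ≤ P * ((Δt / lam) * gi) := mul_nonneg hP0 hcg0
      linarith [hsolve, hRhigh, h4]
  refine ⟨key, ?_⟩
  intro hposNt i j hjNt
  set C := (1 + (Δt / lam) * G)⁻¹ with hCdef
  have hCnn : 0 ≤ C := inv_nonneg.mpr hC0.le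
  set mN := ⨅ i' : ZMod (2 * Nx + 1), Ψ i' Nt with hmN
  have hmN0 : 0 ≤ mN := le_ciInf fun i' => hposNt i'
  have main : ∀ k, k ≤ Nt → ∀ i, C ^ k * mN ≤ Ψ i (Nt - k) := by
    intro k
    induction k with
    | zero => intro _ i; simpa using hinf_le Nt i
    | succ k ih =>
      intro hk i'
      have ihk := ih (by omega)
      have hposk : ∀ i'', 0 ≤ Ψ i'' (Nt - k) := fun i'' =>
        le_trans (mul_nonneg (pow_nonneg hCnn k) hmN0) (ihk i'')
      have hstep := (key (Nt - k) (by omega) (by omega) hposk i').1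
      have hinfk : C ^ k * mN ≤ ⨅ i'' : ZMod (2 * Nx + 1), Ψ i'' (Nt - k) :=
        le_ciInf fun i'' => ihk i''
      have heq : Nt - k - 1 = Nt - (k + 1) := by omega
      rw [heq] at hstep
      calc C ^ (k + 1) * mN = (1 / (1 + (Δt / lam) * G)) * (C ^ k * mN) := by
            rw [hCdef, one_div, pow_succ]; ring
        _ ≤ (1 / (1 + (Δt / lam) * G)) * ⨅ i'' : ZMod (2 * Nx + 1), Ψ i'' (Nt - k) :=
            mul_le_mul_of_nonneg_left hinfk (by positivity)
        _ ≤ Ψ i' (Nt - (k + 1)) := hstep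
  have h := main (Nt - j) (by omega) i
  rwa [Nat.sub_sub_self hjNt] at h
end

section
/- Under the hypotheses of the fictitious-play error theorem, suppose in addition that v^{(k)} := -λ ln ψ^{(k)} converges uniformly on Ω×[0,T] to a continuous function v as k → ∞, that Ψ^{(k)}_{i,j} ≥ Γ_min > 0 uniformly in i, j, k, Δx, Δt, and that there exist increasing positive functions K₁(k), K₂(k) with sup_{i,j}|ψ^{(k)}(x_i,t_j) - Ψ^{(k)}_{i,j}| ≤ K₁(k)(Δx+Δt) + K₂(k)δ^{(0)} for all k, Δx, Δt, δ^{(0)}. Then for every ε > 0 there exists k₀ such that for every k ≥ k₀ there exists η > 0 so that whenever Δx < η, Δt < η and δ^{(0)} < η, one has sup_{i,j}|v(x_i,t_j) - (-λ ln Ψ^{(k)}_{i,j})| < ε. Equivalently, lim_{k→∞} lim_{Δt,Δx,δ^{(0)}→0} sup_{i,j}|v(x_i,t_j) - (-λ ln Ψ^{(k)}_{i,j})| = 0. -/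
lemma abs_log_sub_le_div {a b c : ℝ} (hc : 0 < c) (ha : c ≤ a) (hb : c ≤ b) :
    |Real.log a - Real.log b| ≤ |a - b| / c := by
  wlog h : b ≤ a generalizing a b
  · rw [abs_sub_comm, abs_sub_comm a b]; exact this hb ha (le_of_not_ge h)
  have hb0 : 0 < b := lt_of_lt_of_le hc hb
  have ha0 : 0 < a := lt_of_lt_of_le hc ha
  rw [abs_of_nonneg (sub_nonneg.2 (Real.log_le_log hb0 h)),
    abs_of_nonneg (sub_nonneg.2 h), ← Real.log_div ha0.ne' hb0.ne']
  have h1 : Real.log (a / b) ≤ a / b - 1 :=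
    Real.log_le_sub_one_of_pos (div_pos ha0 hb0)
  have h2 : a / b - 1 = (a - b) / b := by field_simp
  have h3 : (a - b) / b ≤ (a - b) / c :=
    div_le_div_of_nonneg_left (sub_nonneg.2 h) hc hb
  linarith


/-- Double-limit convergence of the discrete value functions: if
`v^{(k)} = -λ ln ψ^{(k)}` converges uniformly to `v`, the discrete solutions
`Ψ^{(k)}` are uniformly bounded below by `Γ_min > 0`, and the discretization
error of `ψ^{(k)}` is controlled by `K₁(k)(Δx+Δt) + K₂(k)δ⁰`, then
`lim_{k→∞} lim_{Δt,Δx,δ⁰→0} sup_{i,j} |v(x_i,t_j) - (-λ ln Ψ^{(k)}_{i,j})| = 0`. -/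
theorem stmt11 (T lam : ℝ) (hT : 0 < T) (hlam : 0 < lam)
    -- continuous fictitious-play iterates ψ^{(k)} > 0 and limit value function v
    (ψ : ℕ → ℝ → ℝ → ℝ) (hψpos : ∀ k y t, 0 < ψ k y t)
    (v : ℝ → ℝ → ℝ) (hv : Continuous fun p : ℝ × ℝ => v p.1 p.2)
    (hconv : ∀ ε > (0 : ℝ), ∃ k0 : ℕ, ∀ k ≥ k0, ∀ y : ℝ, ∀ t ∈ Set.Icc (0 : ℝ) T,
      |(-lam * Real.log (ψ k y t)) - v y t| ≤ ε)
    -- discrete solutions Ψ^{(k)} for each grid (Nx, Nt), uniformly ≥ Γmin > 0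
    (PD : ∀ Nx : ℕ, ∀ _Nt : ℕ, ∀ _k : ℕ, ZMod (2 * Nx + 1) → ℕ → ℝ)
    (Γmin : ℝ) (hΓmin : 0 < Γmin)
    (hPDlb : ∀ Nx Nt : ℕ, 1 ≤ Nx → 1 ≤ Nt → ∀ k : ℕ,
      ∀ i : ZMod (2 * Nx + 1), ∀ j ≤ Nt, Γmin ≤ PD Nx Nt k i j)
    -- initial discretization error δ⁰ of the density, for each grid
    (δ0 : ℕ → ℕ → ℝ) (hδ0 : ∀ Nx Nt : ℕ, 0 ≤ δ0 Nx Nt)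
    -- the fictitious-play error bound with increasing positive constants
    (K1 K2 : ℕ → ℝ) (hK1m : Monotone K1) (hK2m : Monotone K2)
    (hK1p : ∀ k, 0 < K1 k) (hK2p : ∀ k, 0 < K2 k)
    (hbound : ∀ Nx Nt : ℕ, 1 ≤ Nx → 1 ≤ Nt → ∀ k : ℕ,
      ∀ i : ZMod (2 * Nx + 1), ∀ j ≤ Nt,
        |ψ k ((ZMod.val i : ℝ) * (1 / (Nx : ℝ))) ((j : ℝ) * (T / (Nt : ℝ)))
            - PD Nx Nt k i j| ≤
          K1 k * (1 / (Nx : ℝ) + T / (Nt : ℝ)) + K2 k * δ0 Nx Nt) :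
    ∀ ε > (0 : ℝ), ∃ k0 : ℕ, ∀ k ≥ k0, ∃ η > (0 : ℝ),
      ∀ Nx Nt : ℕ, 1 ≤ Nx → 1 ≤ Nt →
        1 / (Nx : ℝ) < η → T / (Nt : ℝ) < η → δ0 Nx Nt < η →
        ∀ i : ZMod (2 * Nx + 1), ∀ j ≤ Nt,
          |v ((ZMod.val i : ℝ) * (1 / (Nx : ℝ))) ((j : ℝ) * (T / (Nt : ℝ)))
              - (-lam * Real.log (PD Nx Nt k i j))| < ε := by
  intro ε hε
  obtain ⟨k0, hk0⟩ := hconv (ε / 2) (by positivity)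
  refine ⟨k0, fun k hk => ?_⟩
  have hCpos : 0 < 2 * K1 k + K2 k := by have := hK1p k; have := hK2p k; linarith
  have hmpos : 0 < min (Γmin / 2) (ε * Γmin / (8 * lam)) :=
    lt_min (by positivity) (by positivity)
  refine ⟨min (Γmin / 2) (ε * Γmin / (8 * lam)) / (2 * K1 k + K2 k),
    by positivity, ?_⟩
  intro Nx Nt hNx hNt hΔx hΔt hδ i j hj
  set y : ℝ := (ZMod.val i : ℝ) * (1 / (Nx : ℝ)) with hy
  set t : ℝ := (j : ℝ) * (T / (Nt : ℝ)) with htdef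
  have hNt0 : (0 : ℝ) < (Nt : ℝ) := by exact_mod_cast Nat.lt_of_lt_of_le Nat.zero_lt_one hNt
  have ht : t ∈ Set.Icc (0 : ℝ) T := by
    constructor
    · have : (0:ℝ) ≤ T / (Nt : ℝ) := by positivity
      positivity
    · have hjle : ((j : ℝ)) ≤ (Nt : ℝ) := by exact_mod_cast hj
      have : t ≤ (Nt : ℝ) * (T / (Nt : ℝ)) :=
        mul_le_mul_of_nonneg_right hjle (by positivity)
      rwa [mul_div_cancel₀ T hNt0.ne'] at this
  have h1 := hk0 k hk y t ht
  have h2 := hbound Nx Nt hNx hNt k i j hj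
  have hPD := hPDlb Nx Nt hNx hNt k i j hj
  have herr : |ψ k y t - PD Nx Nt k i j| < min (Γmin / 2) (ε * Γmin / (8 * lam)) := by
    have hδnn := hδ0 Nx Nt
    have hK1 := hK1p k; have hK2 := hK2p k
    calc |ψ k y t - PD Nx Nt k i j|
        ≤ K1 k * (1 / (Nx : ℝ) + T / (Nt : ℝ)) + K2 k * δ0 Nx Nt := h2
      _ < min (Γmin / 2) (ε * Γmin / (8 * lam)) := by
          have := mul_div_cancel₀ (min (Γmin / 2) (ε * Γmin / (8 * lam))) hCpos.ne'
          nlinarith [mul_lt_mul_of_pos_left hΔx hK1, mul_lt_mul_of_pos_left hΔt hK1,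
            mul_lt_mul_of_pos_left hδ hK2]
  have hmin1 : min (Γmin / 2) (ε * Γmin / (8 * lam)) ≤ Γmin / 2 := min_le_left _ _
  have hmin2 : min (Γmin / 2) (ε * Γmin / (8 * lam)) ≤ ε * Γmin / (8 * lam) := min_le_right _ _
  have habs := abs_lt.1 herr
  have hψlb : Γmin / 2 ≤ ψ k y t := by linarith
  have hlog : |Real.log (ψ k y t) - Real.log (PD Nx Nt k i j)| ≤
      |ψ k y t - PD Nx Nt k i j| / (Γmin / 2) :=
    abs_log_sub_le_div (by positivity) hψlb (by linarith)
  have htri : |v y t - (-lam * Real.log (PD Nx Nt k i j))| ≤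
      |v y t - (-lam * Real.log (ψ k y t))| +
      |(-lam * Real.log (ψ k y t)) - (-lam * Real.log (PD Nx Nt k i j))| :=
    abs_sub_le _ _ _
  have heq : |(-lam * Real.log (ψ k y t)) - (-lam * Real.log (PD Nx Nt k i j))| =
      lam * |Real.log (ψ k y t) - Real.log (PD Nx Nt k i j)| := by
    rw [show (-lam * Real.log (ψ k y t)) - (-lam * Real.log (PD Nx Nt k i j)) =
      -lam * (Real.log (ψ k y t) - Real.log (PD Nx Nt k i j)) by ring, abs_mul,
      abs_neg, abs_of_pos hlam]
  have h1' : |v y t - (-lam * Real.log (ψ k y t))| ≤ ε / 2 := by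
    rw [abs_sub_comm]; exact h1
  have habsnn : (0:ℝ) ≤ |ψ k y t - PD Nx Nt k i j| := abs_nonneg _
  have hlog2 : lam * |Real.log (ψ k y t) - Real.log (PD Nx Nt k i j)| < ε / 4 := by
    have hd : |ψ k y t - PD Nx Nt k i j| / (Γmin / 2) <
        (ε * Γmin / (8 * lam)) / (Γmin / 2) :=
      div_lt_div_of_pos_right (lt_of_lt_of_le herr hmin2) (by positivity)
    have heval : (ε * Γmin / (8 * lam)) / (Γmin / 2) = ε / (4 * lam) := by
      field_simp; ring
    rw [heval] at hd
    have := lt_of_le_of_lt hlog hd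
    calc lam * |Real.log (ψ k y t) - Real.log (PD Nx Nt k i j)|
        < lam * (ε / (4 * lam)) := by
          exact mul_lt_mul_of_pos_left this hlam
      _ = ε / 4 := by field_simp
  calc |v y t - (-lam * Real.log (PD Nx Nt k i j))| ≤ _ := htri
    _ = |v y t - (-lam * Real.log (ψ k y t))| +
        lam * |Real.log (ψ k y t) - Real.log (PD Nx Nt k i j)| := by rw [heq]
    _ < ε / 2 + ε / 4 := by
        have := lt_of_le_of_lt (le_of_eq rfl) hlog2
        exact add_lt_add_of_le_of_lt h1' hlog2
    _ < ε := by linarith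
end
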